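/- Let Δ(z) = (A + (z/(1−z)) 𝟙 bᵀ)^{-1} for the 2-stage Radau IIa scheme. For z in the open unit disk (z ≠ 1), the matrix A + (z/(1−z)) 𝟙 bᵀ is invertible; equivalently det(A + (z/(1−z)) 𝟙 bᵀ) ≠ 0 for all |z| < 1. -/
import Mathlib


/-- Coefficient matrix of the 2-stage Radau IIa scheme. -/
noncomputable def radauA : Matrix (Fin 2) (Fin 2) ℂ := !![5/12, -1/12; 3/4, 1/4]

/-- Weight vector of the 2-stage Radau IIa scheme. -/
noncomputable def radauB : Fin 2 → ℂ := ![3/4, 1/4]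

/-- For the 2-stage Radau IIa scheme, the matrix `A + (z/(1-z)) 𝟙 bᵀ` is
invertible for every `z` in the open unit disk: its determinant does not
vanish for `‖z‖ < 1`. -/
theorem radau_delta_invertible (z : ℂ) (hz : ‖z‖ < 1) :
    (radauA + (z / (1 - z)) • Matrix.vecMulVec ![1, 1] radauB).det ≠ 0 := by
  have hz1 : (1 : ℂ) - z ≠ 0 := by
    intro h
    rw [sub_eq_zero] at h
    rw [← h] at hz
    simp at hz
  have key : (radauA + (z / (1 - z)) • Matrix.vecMulVec ![1, 1] radauB).det
      * (6 * (1 - z)) = 1 := by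
    simp only [div_eq_mul_inv, radauA, radauB, Matrix.det_fin_two, Matrix.add_apply,
      Matrix.smul_apply, Matrix.vecMulVec_apply, smul_eq_mul, Matrix.cons_val_zero,
      Matrix.cons_val_one, Matrix.head_cons, Matrix.cons_val', Matrix.empty_val',
      Matrix.cons_val_fin_one, Matrix.head_fin_const, Matrix.of_apply]
    linear_combination z * mul_inv_cancel₀ hz1
  intro h
  rw [h, zero_mul] at key
  exact zero_ne_one key
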